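/- Let μ be an exchangeable probability measure on {0,1}^n with rank sequence {a_k}, and let q_k = a_k / binom(n,k). Suppose {q_k} is log-concave with its nonzero terms forming an interval of indices (i.e., μ is ULC). Fix a weight λ > 0 and let μ' be the measure on {0,1}^{n-1} obtained by imposing the external field λ on the first coordinate (multiplying probabilities by λ^{η(1)} and renormalizing) and then projecting onto coordinates 2,...,n. Then μ' is exchangeable and its rank sequence is ULC; explicitly, the sequence q'_j = C(q_j + λ q_{j+1}) is log-concave. -/
import Mathlib


open Finset

/-- Number of coordinates equal to `true`. -/
def rankB {m : ℕ} (η : Fin m → Bool) : ℕ := (univ.filter (fun i => η i = true)).card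

/-- A nonnegative sequence is log-concave with interval support. -/
def LogConcaveSeq (q : ℕ → ℝ) : Prop :=
  (∀ j, q j * q (j + 2) ≤ q (j + 1) ^ 2) ∧
  (∀ i j k, i ≤ j → j ≤ k → 0 < q i → 0 < q k → 0 < q j)

lemma rank_sum {m : ℕ} (η : Fin m → Bool) :
    rankB η = ∑ i, (if η i = true then 1 else 0) := by
  simp only [rankB, Finset.card_filter]

lemma rank_cons {m : ℕ} (b : Bool) (η' : Fin m → Bool) :
    rankB (Fin.cons b η') = (if b = true then 1 else 0) + rankB η' := by
  rw [rank_sum, rank_sum, Fin.sum_univ_succ]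
  simp [Fin.cons_zero, Fin.cons_succ]

lemma three_term (q : ℕ → ℝ) (hq : ∀ k, 0 ≤ q k) (hlc : LogConcaveSeq q) (j : ℕ) :
    q j * q (j + 3) ≤ q (j + 1) * q (j + 2) := by
  obtain ⟨h2, hint⟩ := hlc
  by_cases h : 0 < q j * q (j + 3)
  · obtain ⟨hj, hj3⟩ : 0 < q j ∧ 0 < q (j + 3) := by
      rcases mul_pos_iff.mp h with h' | ⟨h1', _⟩
      · exact h'
      · exact absurd (hq j) (not_le.mpr h1')
    have h1 : 0 < q (j + 1) := hint j (j+1) (j+3) (by omega) (by omega) hj hj3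
    have h2' : 0 < q (j + 2) := hint j (j+2) (j+3) (by omega) (by omega) hj hj3
    have k1 := h2 j
    have k2 : q (j + 1) * q (j + 3) ≤ q (j + 2) ^ 2 := by
      have := h2 (j + 1)
      have e1 : j + 1 + 2 = j + 3 := by ring
      have e2 : j + 1 + 1 = j + 2 := by ring
      rwa [e1, e2] at this
    have prod := mul_le_mul k1 k2 (mul_nonneg (hq (j+1)) (hq (j+3))) (sq_nonneg (q (j+1)))
    have hpos : 0 < q (j+1) * q (j+2) := mul_pos h1 h2'
    have key : (q j * q (j + 3)) * (q (j+1) * q (j+2)) ≤ (q (j+1) * q (j+2)) * (q (j+1) * q (j+2)) := by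
      nlinarith [prod]
    exact le_of_mul_le_mul_right key hpos
  · push_neg at h
    exact h.trans (mul_nonneg (hq _) (hq _))

theorem stmt_3 (n : ℕ) (q : ℕ → ℝ) (l : ℝ) (hl : 0 < l)
    (hq : ∀ k, 0 ≤ q k) (hsupp : ∀ k, n + 1 < k → q k = 0)
    (hlc : LogConcaveSeq q)
    (hprob : ∑ η : Fin (n+1) → Bool, q (rankB η) = 1) :
    (∃ C : ℝ, 0 < C ∧ ∀ η' : Fin n → Bool,
      ((if (Fin.cons true η' : Fin (n+1) → Bool) 0 = true then l else 1)
          * q (rankB (Fin.cons true η' : Fin (n+1) → Bool))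
        + (if (Fin.cons false η' : Fin (n+1) → Bool) 0 = true then l else 1)
          * q (rankB (Fin.cons false η' : Fin (n+1) → Bool)))
        / (∑ η : Fin (n+1) → Bool, (if η 0 = true then l else 1) * q (rankB η))
      = C * (q (rankB η') + l * q (rankB η' + 1))) ∧
    LogConcaveSeq (fun j => q j + l * q (j + 1)) := by
  obtain ⟨h2, hint⟩ := hlc
  constructor
  · -- denominator positivity
    set D : ℝ := ∑ η : Fin (n+1) → Bool, (if η 0 = true then l else 1) * q (rankB η) with hD
    have hmin : 0 < min l 1 := lt_min hl one_pos
    have hDge : min l 1 ≤ D := by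
      calc min l 1 = ∑ η : Fin (n+1) → Bool, min l 1 * q (rankB η) := by
            rw [← Finset.mul_sum, hprob, mul_one]
        _ ≤ D := by
            apply Finset.sum_le_sum
            intro η _
            apply mul_le_mul_of_nonneg_right _ (hq _)
            split
            · exact min_le_left _ _
            · exact min_le_right _ _
    have hDpos : 0 < D := lt_of_lt_of_le hmin hDge
    refine ⟨1 / D, by positivity, fun η' => ?_⟩
    have ht : rankB (Fin.cons true η' : Fin (n+1) → Bool) = rankB η' + 1 := by
      rw [rank_cons]; simp [Nat.add_comm]
    have hf : rankB (Fin.cons false η' : Fin (n+1) → Bool) = rankB η' := by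
      rw [rank_cons]; simp
    rw [ht, hf]
    simp only [Fin.cons_zero, Bool.false_eq_true, if_false, if_pos]
    field_simp
    ring
  · refine ⟨fun j => ?_, fun i j k hij hjk hi hk => ?_⟩
    · have t1 := h2 j
      have t2 := h2 (j + 1)
      have t3 := three_term q hq ⟨h2, hint⟩ j
      have e1 : j + 1 + 2 = j + 3 := by ring
      have e2 : j + 1 + 1 = j + 2 := by ring
      simp only [e1, e2] at t2 ⊢
      nlinarith [mul_le_mul_of_nonneg_left t3 hl.le,
        mul_le_mul_of_nonneg_left t2 (mul_self_nonneg l), hl.le]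
    · -- interval support for q j + l * q (j+1)
      simp only at hi hk ⊢
      have hqpos : ∀ m, 0 < q m + l * q (m + 1) → 0 < q m ∨ 0 < q (m + 1) := by
        intro m hm
        by_contra hcon
        push_neg at hcon
        have h1 : q m = 0 := le_antisymm hcon.1 (hq m)
        have h2' : q (m + 1) = 0 := le_antisymm hcon.2 (hq (m+1))
        rw [h1, h2'] at hm; simp at hm
      rcases hqpos i hi with hi' | hi' <;> rcases hqpos k hk with hk' | hk'
      all_goals {
        first
        | (rcases Nat.lt_or_ge j (k) with hjk' | hjk'
           · have : 0 < q (j + 1) := by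
               apply hint _ (j+1) _ _ _ hi' hk' <;> omega
             have : 0 ≤ q j := hq j
             nlinarith
           · -- j = k
             have hje : j = k := le_antisymm hjk hjk'
             subst hje
             have : 0 ≤ q (j + 1) := hq _
             nlinarith)
      }
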